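/- Recursive relations for powers of the Green function of the linearized model. Let X be an M×n real matrix and for z in the complex upper half-plane let H(z) = √z [[0, X],[X^T, 0]] (an (M+n)×(M+n) matrix, with √z the principal square root) and G(z) = (H(z) − z I)^{−1}. Then, with ′ denoting differentiation in z, the following identities hold wherever G is defined: G² = 2G′ + G/z, G³ = (G²)′ + G²/z, and G⁴ = (2/3)(G³)′ + G³/z. -/

import Mathlib

/-!
Statement 11: Recursive relations for powers of the Green function of the linearized model
(Lemma 4.6 of Bao–Ding–Wang): `G² = 2G′ + G/z`, `G³ = (G²)′ + G²/z`, `G⁴ = (2/3)(G³)′ + G³/z`.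
-/

open Matrix

noncomputable section

/-- The `√z`-scaled linearization `H(z) = √z [[0, X], [Xᵀ, 0]]` of an `M × n` real matrix,
with `√z` the principal complex square root. -/
def linH {M N : ℕ} (X : Matrix (Fin M) (Fin N) ℝ) (z : ℂ) :
    Matrix (Fin M ⊕ Fin N) (Fin M ⊕ Fin N) ℂ :=
  z ^ ((1 : ℂ) / 2) •
    Matrix.fromBlocks 0 (X.map (fun t => (t : ℂ))) (X.map (fun t => (t : ℂ)))ᵀ 0

/-- The Green function `G(z) = (H(z) − z I)⁻¹`. -/
def GreenG {M N : ℕ} (X : Matrix (Fin M) (Fin N) ℝ) (z : ℂ) :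
    Matrix (Fin M ⊕ Fin N) (Fin M ⊕ Fin N) ℂ :=
  (linH X z - z • (1 : Matrix (Fin M ⊕ Fin N) (Fin M ⊕ Fin N) ℂ))⁻¹

namespace GreenAux

attribute [local instance] Matrix.linftyOpNormedAddCommGroup Matrix.linftyOpNormedSpace
  Matrix.linftyOpNormedRing Matrix.linftyOpNormedAlgebra

variable {M N : ℕ}

/-- Ambient matrix type. -/
abbrev Mat (M N : ℕ) := Matrix (Fin M ⊕ Fin N) (Fin M ⊕ Fin N) ℂ

/-- The fixed block matrix. -/
def B (X : Matrix (Fin M) (Fin N) ℝ) : Mat M N :=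
  Matrix.fromBlocks 0 (X.map (fun t => (t : ℂ))) (X.map (fun t => (t : ℂ)))ᵀ 0

/-- `A(z) = H(z) - z`. -/
def A (X : Matrix (Fin M) (Fin N) ℝ) (z : ℂ) : Mat M N :=
  linH X z - z • 1

lemma greenG_eq (X : Matrix (Fin M) (Fin N) ℝ) (z : ℂ) :
    GreenG X z = Ring.inverse (A X z) := by
  rw [GreenG, Matrix.nonsing_inv_eq_ringInverse]; rfl

/-- Entry evaluation as a continuous linear map. -/
def entryCLM (a b : Fin M ⊕ Fin N) : Mat M N →L[ℂ] ℂ :=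
  LinearMap.toContinuousLinearMap
    { toFun := fun m => m a b
      map_add' := fun _ _ => rfl
      map_smul' := fun _ _ => rfl }

lemma hasDerivAt_green (X : Matrix (Fin M) (Fin N) ℝ) {z : ℂ} (hz : 0 < z.im)
    (hinv : IsUnit (A X z).det) :
    HasDerivAt (fun w => GreenG X w)
      ((1 / 2 : ℂ) • GreenG X z ^ 2 - (2 * z)⁻¹ • GreenG X z) z := by
  have hz0 : z ≠ 0 := fun h => by simp [h] at hz
  have hslit : z ∈ Complex.slitPlane := Or.inr hz.ne'
  -- derivative of A
  have hc : HasDerivAt (fun w : ℂ => w ^ ((1 : ℂ) / 2))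
      (((1 : ℂ) / 2) * z ^ ((1 : ℂ) / 2 - 1)) z :=
    (Complex.hasStrictDerivAt_cpow_const hslit).hasDerivAt
  have hA : HasDerivAt (fun w => A X w)
      ((((1 : ℂ) / 2) * z ^ ((1 : ℂ) / 2 - 1)) • B X - (1 : Mat M N)) z := by
    have h1 := hc.smul_const (B X)
    have h2 : HasDerivAt (fun w : ℂ => w • (1 : Mat M N)) (1 : Mat M N) z := by
      have h := (hasDerivAt_id z).smul_const (1 : Mat M N)
      simp only [id, one_smul] at h
      exact h
    exact h1.sub h2
  -- the unit
  have hu : IsUnit (A X z) := (Matrix.isUnit_iff_isUnit_det _).mpr hinv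
  set G := GreenG X z with hG
  have hGA : G * A X z = 1 := Matrix.nonsing_inv_mul _ hinv
  have hAG : A X z * G = 1 := Matrix.mul_nonsing_inv _ hinv
  -- rewrite A' as a combination of A and 1
  have hcpow : ((1 : ℂ) / 2) * z ^ ((1 : ℂ) / 2 - 1)
      = (2 * z)⁻¹ * z ^ ((1 : ℂ) / 2) := by
    have h : z ^ ((1 : ℂ) / 2 - 1) = z ^ ((1 : ℂ) / 2) * z⁻¹ := by
      rw [← Complex.cpow_neg_one, ← Complex.cpow_add _ _ hz0]; norm_num
    rw [h, mul_inv]; ring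
  have hA' : (((1 : ℂ) / 2) * z ^ ((1 : ℂ) / 2 - 1)) • B X - (1 : Mat M N)
      = (2 * z)⁻¹ • A X z - ((1 : ℂ) / 2) • (1 : Mat M N) := by
    have hAz : A X z = z ^ ((1 : ℂ) / 2) • B X - z • (1 : Mat M N) := rfl
    rw [hAz, smul_sub, smul_smul, smul_smul, hcpow]
    have h2z : (2 * z)⁻¹ * z = 1 / 2 := by field_simp
    rw [h2z, sub_sub, ← add_smul]
    norm_num
  -- derivative of the inverse
  have hinv' := (hasFDerivAt_ringInverse (𝕜 := ℂ) hu.unit).comp_hasDerivAt z hA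
  have hcoe : ((hu.unit⁻¹ : (Mat M N)ˣ) : Mat M N) = G := by
    have : Ring.inverse (A X z) = ((hu.unit⁻¹ : (Mat M N)ˣ) : Mat M N) := by
      conv_lhs => rw [← hu.unit_spec]
      exact Ring.inverse_unit hu.unit
    rw [hG, greenG_eq, this]
  have hfun : (Ring.inverse ∘ fun w => A X w) = fun w => GreenG X w := by
    funext w
    rw [greenG_eq]
    rfl
  rw [hfun] at hinv'
  refine hinv'.congr_deriv ?_
  symm
  simp only [ContinuousLinearMap.neg_apply, ContinuousLinearMap.mulLeftRight_apply, hcoe]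
  rw [hA']
  rw [mul_sub, sub_mul, mul_smul_comm, mul_smul_comm, smul_mul_assoc, smul_mul_assoc,
    hGA, one_mul, mul_one]
  rw [neg_sub]
  congr 1
  rw [pow_two]

variable (X : Matrix (Fin M) (Fin N) ℝ) {z : ℂ}

end GreenAux

open GreenAux in
/-- **Recursive relations for powers of the Green function**: wherever `G` is defined
(i.e. on an open subset of the upper half-plane on which `H(z) − z I` is invertible),
`G² = 2G′ + G/z`, `G³ = (G²)′ + G²/z` and `G⁴ = (2/3)(G³)′ + G³/z`, the derivatives being
taken entrywise in `z`. -/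
theorem green_function_recursions
    (M N : ℕ) (X : Matrix (Fin M) (Fin N) ℝ)
    (U : Set ℂ) (hUopen : IsOpen U) (hUup : ∀ w ∈ U, 0 < w.im)
    (hUinv : ∀ w ∈ U,
      IsUnit (linH X w - w • (1 : Matrix (Fin M ⊕ Fin N) (Fin M ⊕ Fin N) ℂ)).det)
    (z : ℂ) (hz : z ∈ U) :
    (∀ a b, (GreenG X z ^ 2) a b
        = 2 * deriv (fun w => GreenG X w a b) z + GreenG X z a b / z) ∧
    (∀ a b, (GreenG X z ^ 3) a b
        = deriv (fun w => (GreenG X w ^ 2) a b) z + (GreenG X z ^ 2) a b / z) ∧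
    (∀ a b, (GreenG X z ^ 4) a b
        = 2 / 3 * deriv (fun w => (GreenG X w ^ 3) a b) z + (GreenG X z ^ 3) a b / z) := by
  classical
  letI : NormedRing (Mat M N) := Matrix.linftyOpNormedRing
  letI : NormedAlgebra ℂ (Mat M N) := Matrix.linftyOpNormedAlgebra
  have hz0 : z ≠ 0 := fun h => by simpa [h] using hUup z hz
  set G := GreenG X z with hGdef
  set D : Mat M N := (1 / 2 : ℂ) • G ^ 2 - (2 * z)⁻¹ • G with hDdef
  have hG : HasDerivAt (fun w => GreenG X w) D z :=
    hasDerivAt_green X (hUup z hz) (hUinv z hz)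
  have hG2 : HasDerivAt (fun w => GreenG X w ^ 2) (D * G + G * D) z := by
    have := hG.mul hG
    simp only [pow_two]
    exact this
  have hG3 : HasDerivAt (fun w => GreenG X w ^ 3) ((D * G + G * D) * G + G ^ 2 * D) z := by
    have := hG2.mul hG
    simp only [pow_succ, pow_zero, one_mul] at this ⊢
    exact this
  have hentry : ∀ (f : ℂ → Mat M N) (f' : Mat M N), HasDerivAt f f' z →
      ∀ a b, deriv (fun w => f w a b) z = f' a b := by
    intro f f' hf a b
    have := (entryCLM (M := M) (N := N) a b).hasFDerivAt.comp_hasDerivAt z hf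
    exact this.deriv
  -- commutation facts
  have hDG : D * G = (1 / 2 : ℂ) • G ^ 3 - (2 * z)⁻¹ • G ^ 2 := by
    rw [hDdef, sub_mul, smul_mul_assoc, smul_mul_assoc, ← pow_succ, ← pow_two]
  have hGD : G * D = (1 / 2 : ℂ) • G ^ 3 - (2 * z)⁻¹ • G ^ 2 := by
    rw [hDdef, mul_sub, mul_smul_comm, mul_smul_comm, ← pow_succ', ← pow_two]
  have hG2D : G ^ 2 * D = (1 / 2 : ℂ) • G ^ 4 - (2 * z)⁻¹ • G ^ 3 := by
    rw [hDdef, mul_sub, mul_smul_comm, mul_smul_comm, ← pow_add, ← pow_succ]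
  have e2 : D * G + G * D = G ^ 3 - z⁻¹ • G ^ 2 := by
    rw [hDG, hGD, sub_add_sub_comm, ← add_smul, ← add_smul,
      show ((1:ℂ)/2 + 1/2) = 1 by norm_num, one_smul,
      show ((2*z)⁻¹ + (2*z)⁻¹ : ℂ) = z⁻¹ by rw [mul_inv]; ring]
  have e3 : (D * G + G * D) * G + G ^ 2 * D
      = (3 / 2 : ℂ) • G ^ 4 - (3 * (2 * z)⁻¹) • G ^ 3 := by
    rw [e2, hG2D, sub_mul, smul_mul_assoc, ← pow_succ, ← pow_succ, sub_add_sub_comm]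
    congr 1
    · nth_rewrite 1 [← one_smul ℂ (G ^ 4)]
      rw [← add_smul]
      norm_num
    · rw [← add_smul]
      congr 1
      rw [mul_inv]
      ring
  refine ⟨?_, ?_, ?_⟩
  · intro a b
    rw [hentry _ _ hG a b, hDdef]
    simp only [Matrix.sub_apply, Matrix.smul_apply, smul_eq_mul]
    field_simp
    ring
  · intro a b
    rw [hentry _ _ hG2 a b, e2]
    simp only [Matrix.sub_apply, Matrix.smul_apply, smul_eq_mul]
    field_simp
    ring
  · intro a b
    rw [hentry _ _ hG3 a b, e3]
    simp only [Matrix.sub_apply, Matrix.smul_apply, smul_eq_mul]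
    rw [mul_inv]
    ring

end
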